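/- Let T be a completely positive trace-preserving map on M_n. (1) If T is irreducible and π is an invariant state of T, then π is the unique invariant state of T and π is positive definite (faithful). (2) Conversely, if T admits a unique invariant state and this state is positive definite, then T is irreducible. -/

import Mathlib

open Matrix
open scoped ComplexOrder

noncomputable section

/-- The algebra of `n × n` complex matrices. -/
abbrev Mn (n : ℕ) : Type := Matrix (Fin n) (Fin n) ℂ

/-- The map `X ↦ Q X Q`. -/
def sandwich {n : ℕ} (Q : Mn n) : Module.End ℂ (Mn n) :=
  (LinearMap.mulLeft ℂ Q).comp (LinearMap.mulRight ℂ Q)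

/-- The sum of the two components of a pair. -/
def sumPair (n : ℕ) : (Mn n × Mn n) →ₗ[ℂ] Mn n :=
  LinearMap.fst ℂ (Mn n) (Mn n) + LinearMap.snd ℂ (Mn n) (Mn n)

/-- The QMC `Λ_{T,V}` induced by the channel `T` and the subspace `V` (with orthogonal
projection `P` onto `V` and `Q = I − P`):
`Λ(X₁,X₂) = ((I−ℚ)(T(X₁+X₂)), ℚ(T(X₁+X₂)))` where `ℚ(Y) = QYQ`. -/
def Lam {n : ℕ} (T : Module.End ℂ (Mn n)) (Q : Mn n) : Module.End ℂ (Mn n × Mn n) :=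
  LinearMap.prod
    (((1 : Module.End ℂ (Mn n)) - sandwich Q) ∘ₗ (T ∘ₗ sumPair n))
    ((sandwich Q) ∘ₗ (T ∘ₗ sumPair n))

/-- `ℙ₁(X₁,X₂) = (X₁,0)`. -/
def proj1 (n : ℕ) : Module.End ℂ (Mn n × Mn n) :=
  (LinearMap.inl ℂ (Mn n) (Mn n)).comp (LinearMap.fst ℂ (Mn n) (Mn n))

/-- `ℙ₂(X₁,X₂) = (0,X₂)`. -/
def proj2 (n : ℕ) : Module.End ℂ (Mn n × Mn n) :=
  (LinearMap.inr ℂ (Mn n) (Mn n)).comp (LinearMap.snd ℂ (Mn n) (Mn n))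

/-- The block-diagonal part `S_d = diag(S₁₁,S₂₂)` of a map on `M_n ⊕ M_n`. -/
def diagPart {n : ℕ} (S : Module.End ℂ (Mn n × Mn n)) : Module.End ℂ (Mn n × Mn n) :=
  proj1 n * S * proj1 n + proj2 n * S * proj2 n

/-- The map `E(X₁,X₂) = (X₁+X₂, X₁+X₂)`. -/
def Emap (n : ℕ) : Module.End ℂ (Mn n × Mn n) :=
  LinearMap.prod (sumPair n) (sumPair n)

/-- The map `Θ_W(X₁,X₂) = Tr(X₁+X₂)·W`. -/
def Theta {n : ℕ} (W : Mn n × Mn n) : Module.End ℂ (Mn n × Mn n) :=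
  ((Matrix.traceLinearMap (Fin n) ℂ ℂ) ∘ₗ sumPair n).smulRight W

/-- The mean hitting time `τ(ρ → V) = Σ_{r ≥ 1} r·Tr(ℙT(ℚT)^{r−1} ρ)`. -/
def tau {n : ℕ} (T : Module.End ℂ (Mn n)) (P Q : Mn n) (ρ : Mn n) : ℂ :=
  ∑' r : ℕ, ((r : ℂ) + 1) * ((sandwich P * T * (sandwich Q * T) ^ r) ρ).trace

/-- The pure state `ρ_φ = |φ⟩⟨φ|`. -/
def rhoOf {n : ℕ} (φ : Fin n → ℂ) : Mn n := Matrix.vecMulVec φ (star φ)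

/-- A positive map on `M_n`. -/
def IsPosMap {n : ℕ} (T : Module.End ℂ (Mn n)) : Prop :=
  ∀ X : Mn n, X.PosSemidef → (T X).PosSemidef

/-- A trace-preserving map on `M_n`. -/
def IsTracePreserving {n : ℕ} (T : Module.End ℂ (Mn n)) : Prop :=
  ∀ X : Mn n, (T X).trace = X.trace

/-- A quantum channel: a completely positive trace-preserving map, given by a Kraus
decomposition `T(X) = Σᵢ Vᵢ X Vᵢ*` with `Σᵢ Vᵢ* Vᵢ = I`. -/
def IsChannel {n : ℕ} (T : Module.End ℂ (Mn n)) : Prop :=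
  ∃ (k : ℕ) (V : Fin k → Mn n),
    (∀ X : Mn n, T X = ∑ i, V i * X * (V i)ᴴ) ∧ (∑ i, (V i)ᴴ * V i = 1)

/-- Irreducibility of a positive map on `M_n`: the only orthogonal projections `P` with
`T(P M_n P) ⊆ P M_n P` are `P = 0` and `P = I`. -/
def IsIrreducibleMap {n : ℕ} (T : Module.End ℂ (Mn n)) : Prop :=
  ∀ P : Mn n, P.IsHermitian → P * P = P →
    (∀ X : Mn n, ∃ Y : Mn n, T (P * X * P) = P * Y * P) → P = 0 ∨ P = 1

namespace Stmt10Aux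

variable {n : ℕ} {T : Module.End ℂ (Mn n)}

lemma eq_zero_of_mulVec {M : Mn n} (h : ∀ x, M *ᵥ x = 0) : M = 0 := by
  ext i j
  have := congrFun (h (Pi.single j 1)) i
  simpa [mulVec_single] using this

lemma trace_nonneg_of_psd {A : Mn n} (hA : A.PosSemidef) : 0 ≤ A.trace := by
  rw [Matrix.trace]
  apply Finset.sum_nonneg
  intro i _
  have := hA.dotProduct_mulVec_nonneg (Pi.single i 1)
  simpa [mulVec_single, dotProduct, Pi.single_apply] using this

lemma psd_exists_conj {A : Mn n} (hA : A.PosSemidef) : ∃ B : Mn n, A = Bᴴ * B := by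
  open scoped MatrixOrder in
  exact CStarAlgebra.nonneg_iff_eq_star_mul_self.mp hA.nonneg

lemma eq_zero_of_psd_trace_zero {A : Mn n} (hA : A.PosSemidef) (h : A.trace = 0) : A = 0 := by
  obtain ⟨B, rfl⟩ := psd_exists_conj hA
  rw [Matrix.trace] at h
  have h0 : ∀ i ∈ Finset.univ, (0:ℂ) ≤ (Bᴴ * B).diag i := by
    intro i _
    have := (posSemidef_conjTranspose_mul_self B).dotProduct_mulVec_nonneg (Pi.single i 1)
    simpa [mulVec_single, dotProduct, Pi.single_apply] using this
  have hz := (Finset.sum_eq_zero_iff_of_nonneg h0).mp h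
  suffices hB : B = 0 by rw [hB]; simp
  ext j i
  have hi := hz i (Finset.mem_univ i)
  simp only [Matrix.diag, Matrix.mul_apply, conjTranspose_apply] at hi
  have h2 : ∀ k ∈ Finset.univ, (0:ℂ) ≤ star (B k i) * B k i := by
    intro k _; exact star_mul_self_nonneg _
  have := (Finset.sum_eq_zero_iff_of_nonneg h2).mp hi j (Finset.mem_univ j)
  simpa [Complex.star_def, ← Complex.normSq_eq_conj_mul_self, Complex.normSq_eq_zero] using this

lemma conj_mul_conj (U A B : Mn n) (hU : star U * U = 1) :
    (U * A * star U) * (U * B * star U) = U * (A * B) * star U := by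
  calc (U * A * star U) * (U * B * star U)
      = U * (A * ((star U * U) * (B * star U))) := by simp only [Matrix.mul_assoc]
    _ = U * (A * B) * star U := by rw [hU, Matrix.one_mul]; simp only [Matrix.mul_assoc]

def specFun {δ : Mn n} (hδ : δ.IsHermitian) (f : ℝ → ℝ) : Mn n :=
  (hδ.eigenvectorUnitary : Mn n) * diagonal (fun i => (f (hδ.eigenvalues i) : ℂ)) *
    (star (hδ.eigenvectorUnitary : Mn n))

lemma specFun_herm {δ : Mn n} (hδ : δ.IsHermitian) (f : ℝ → ℝ) : (specFun hδ f).IsHermitian := by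
  have hD : (diagonal fun i => (f (hδ.eigenvalues i) : ℂ)).IsHermitian :=
    isHermitian_diagonal_iff.mpr fun i => Complex.conj_ofReal _
  unfold specFun
  rw [Matrix.IsHermitian]
  simp only [Matrix.star_eq_conjTranspose, conjTranspose_mul, conjTranspose_conjTranspose,
    hD.eq, Matrix.mul_assoc]

lemma specFun_mul {δ : Mn n} (hδ : δ.IsHermitian) (f g : ℝ → ℝ) :
    specFun hδ f * specFun hδ g = specFun hδ (fun x => f x * g x) := by
  unfold specFun
  rw [conj_mul_conj _ _ _ ((Matrix.mem_unitaryGroup_iff').mp hδ.eigenvectorUnitary.2),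
    diagonal_mul_diagonal]
  push_cast
  rfl

lemma specFun_add {δ : Mn n} (hδ : δ.IsHermitian) (f g : ℝ → ℝ) :
    specFun hδ f + specFun hδ g = specFun hδ (fun x => f x + g x) := by
  unfold specFun
  rw [← Matrix.add_mul, ← Matrix.mul_add, diagonal_add]
  push_cast
  rfl

lemma specFun_congr {δ : Mn n} (hδ : δ.IsHermitian) {f g : ℝ → ℝ} (h : ∀ x, f x = g x) :
    specFun hδ f = specFun hδ g := by
  unfold specFun
  have he : (fun i => (f (hδ.eigenvalues i) : ℂ)) = fun i => (g (hδ.eigenvalues i) : ℂ) :=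
    funext fun i => by rw [h]
  rw [he]

lemma specFun_zero {δ : Mn n} (hδ : δ.IsHermitian) : specFun hδ (fun _ => 0) = 0 := by
  unfold specFun
  simp

lemma specFun_id {δ : Mn n} (hδ : δ.IsHermitian) : specFun hδ (fun x => x) = δ :=
  (hδ.spectral_theorem).symm

lemma specFun_psd {δ : Mn n} (hδ : δ.IsHermitian) {f : ℝ → ℝ} (hf : ∀ x, 0 ≤ f x) :
    (specFun hδ f).PosSemidef := by
  unfold specFun
  refine Matrix.PosSemidef.mul_mul_conjTranspose_same ?_ _
  refine posSemidef_diagonal_iff.mpr ?_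
  intro i
  simpa using hf _

lemma specFun_mulVec_zero_iff {δ : Mn n} (hδ : δ.IsHermitian) (f : ℝ → ℝ) (x : Fin n → ℂ) :
    specFun hδ f *ᵥ x = 0 ↔
      ∀ i, (f (hδ.eigenvalues i) : ℂ) * ((star (hδ.eigenvectorUnitary : Mn n)) *ᵥ x) i = 0 := by
  set U : Mn n := (hδ.eigenvectorUnitary : Mn n) with hUdef
  have hU : star U * U = 1 := (Matrix.mem_unitaryGroup_iff').mp hδ.eigenvectorUnitary.2
  set D : Mn n := diagonal (fun i => (f (hδ.eigenvalues i) : ℂ)) with hDdef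
  have key : specFun hδ f *ᵥ x = U *ᵥ (D *ᵥ (star U *ᵥ x)) := by
    unfold specFun
    simp only [mulVec_mulVec, ← hUdef, ← hDdef, Matrix.mul_assoc]
  have hiff1 : specFun hδ f *ᵥ x = 0 ↔ D *ᵥ (star U *ᵥ x) = 0 := by
    constructor
    · intro h
      rw [key] at h
      have : (star U * U) *ᵥ (D *ᵥ (star U *ᵥ x)) = 0 := by
        rw [← mulVec_mulVec, h, mulVec_zero]
      rwa [hU, one_mulVec] at this
    · intro h
      rw [key, h, mulVec_zero]
  have hDi : ∀ (w : Fin n → ℂ) i, (D *ᵥ w) i = (f (hδ.eigenvalues i) : ℂ) * w i := by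
    intro w i
    rw [hDdef]
    exact mulVec_diagonal _ _ _
  rw [hiff1]
  constructor
  · intro h i
    rw [← hDi, h]
    rfl
  · intro h
    funext i
    rw [hDi]
    exact h i

lemma channel_psd (hc : IsChannel T) {X : Mn n} (hX : X.PosSemidef) : (T X).PosSemidef := by
  obtain ⟨k, V, hV, -⟩ := hc
  rw [hV]
  have : ∀ s : Finset (Fin k), (∑ i ∈ s, V i * X * (V i)ᴴ).PosSemidef := by
    intro s
    induction s using Finset.induction_on with
    | empty => simpa using Matrix.PosSemidef.zero
    | insert _ _ hni ih =>
        rw [Finset.sum_insert hni]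
        exact (hX.mul_mul_conjTranspose_same _).add ih
  exact this Finset.univ

lemma channel_tp (hc : IsChannel T) (X : Mn n) : (T X).trace = X.trace := by
  obtain ⟨k, V, hV, hsum⟩ := hc
  rw [hV, Matrix.trace_sum]
  calc ∑ i, (V i * X * (V i)ᴴ).trace = ∑ i, ((V i)ᴴ * V i * X).trace := by
        congr 1
        funext i
        rw [Matrix.trace_mul_cycle]
    _ = ((∑ i, (V i)ᴴ * V i) * X).trace := by rw [Finset.sum_mul, Matrix.trace_sum]
    _ = X.trace := by rw [hsum, Matrix.one_mul]

lemma channel_conjT (hc : IsChannel T) (X : Mn n) : T Xᴴ = (T X)ᴴ := by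
  obtain ⟨k, V, hV, -⟩ := hc
  rw [hV, hV, Matrix.conjTranspose_sum]
  congr 1
  funext i
  simp [Matrix.conjTranspose_mul, Matrix.mul_assoc]

lemma psd_herm_sandwich {A R : Mn n} (hA : A.PosSemidef) (hR : R.IsHermitian) :
    (R * A * R).PosSemidef := by
  have := hA.mul_mul_conjTranspose_same R
  rwa [hR.eq] at this

lemma psd_corner_zero {A R : Mn n} (hA : A.PosSemidef) (hR : R.IsHermitian)
    (h : R * A * R = 0) : A * R = 0 := by
  obtain ⟨B, rfl⟩ := psd_exists_conj hA
  have h1 : (B * R)ᴴ * (B * R) = 0 := by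
    have e : (B * R)ᴴ * (B * R) = R * (Bᴴ * B) * R := by
      rw [Matrix.conjTranspose_mul]
      rw [hR.eq]
      noncomm_ring
    rw [e, h]
  have h2 : B * R = 0 := Matrix.conjTranspose_mul_self_eq_zero.mp h1
  rw [Matrix.mul_assoc, h2, Matrix.mul_zero]

lemma trace_sandwich_decomp {A Q : Mn n} (hQ : Q * Q = Q) :
    A.trace - (Q * A * Q).trace = ((1 - Q) * A * (1 - Q)).trace := by
  have e1 : (1 - Q : Mn n) * A * (1 - Q) = A - Q * A - (A * Q - Q * A * Q) := by
    noncomm_ring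
  rw [e1]
  simp only [Matrix.trace_sub]
  have e2 : (Q * A * Q).trace = (Q * A).trace := by
    rw [Matrix.trace_mul_cycle, hQ]
  have e3 : (A * Q).trace = (Q * A).trace := Matrix.trace_mul_comm _ _
  rw [e2, e3]
  ring

lemma psd_smul {r : Mn n} (hr : r.PosSemidef) {t : ℝ} (ht : 0 ≤ t) :
    ((t:ℂ) • r).PosSemidef := by
  refine PosSemidef.of_dotProduct_mulVec_nonneg ?_ ?_
  · rw [Matrix.IsHermitian, conjTranspose_smul, hr.1.eq]
    congr 1
    exact Complex.conj_ofReal t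
  · intro x
    rw [smul_mulVec, dotProduct_smul, smul_eq_mul]
    exact mul_nonneg (by exact_mod_cast ht) (hr.dotProduct_mulVec_nonneg x)

/-- decomposition of an invariant Hermitian matrix into invariant positive and negative parts -/
lemma invariant_parts (hc : IsChannel T) {δ : Mn n} (hδ : δ.IsHermitian) (hinv : T δ = δ) :
    ∃ p q Q : Mn n, p.PosSemidef ∧ q.PosSemidef ∧ δ = p - q ∧
      T p = p ∧ T q = q ∧ Q * p = p ∧ Q * q = 0 ∧
      (∀ x, δ *ᵥ x = 0 → p *ᵥ x = 0) ∧ (∀ x, δ *ᵥ x = 0 → q *ᵥ x = 0) := by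
  classical
  set fp : ℝ → ℝ := fun x => max x 0 with hfp
  set fq : ℝ → ℝ := fun x => max x 0 - x with hfq
  set fQ : ℝ → ℝ := fun x => if 0 < x then 1 else 0 with hfQ
  set p := specFun hδ fp with hpdef
  set q := specFun hδ fq with hqdef
  set Q := specFun hδ fQ with hQdef
  have hppsd : p.PosSemidef := specFun_psd hδ (fun x => le_max_right _ _)
  have hqpsd : q.PosSemidef := specFun_psd hδ (fun x => by simp [hfq, le_max_left])
  have hpq : δ = p - q := by
    have h1 : specFun hδ fq + specFun hδ (fun x => x) = specFun hδ fp := by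
      rw [specFun_add]
      apply specFun_congr
      intro x
      simp [hfq, hfp]
    rw [specFun_id] at h1
    rw [hpdef, ← h1, ← hqdef]
    abel
  have hQH : Q.IsHermitian := specFun_herm hδ fQ
  have hQQ : Q * Q = Q := by
    rw [hQdef, specFun_mul]
    apply specFun_congr
    intro x
    by_cases h0 : 0 < x <;> simp [hfQ, h0]
  have hQp : Q * p = p := by
    rw [hQdef, hpdef, specFun_mul]
    apply specFun_congr
    intro x
    by_cases h0 : 0 < x
    · simp [hfQ, hfp, h0]
    · simp [hfQ, hfp, h0, max_eq_right (le_of_not_gt h0)]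
  have hpQ : p * Q = p := by
    rw [hQdef, hpdef, specFun_mul]
    apply specFun_congr
    intro x
    by_cases h0 : 0 < x
    · simp [hfQ, hfp, h0]
    · simp [hfQ, hfp, h0, max_eq_right (le_of_not_gt h0)]
  have hQq : Q * q = 0 := by
    rw [hQdef, hqdef, specFun_mul, ← specFun_zero hδ]
    apply specFun_congr
    intro x
    by_cases h0 : 0 < x
    · simp [hfQ, hfq, h0, max_eq_left h0.le]
    · simp [hfQ, hfq, h0]
  have h1QH : (1 - Q : Mn n).IsHermitian := by
    rw [Matrix.IsHermitian, conjTranspose_sub, conjTranspose_one, hQH.eq]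
  have h2 : T p - T q = p - q := by rw [← map_sub, ← hpq, hinv, hpq]
  have h4 : Q * (p - q) * Q = p := by
    rw [Matrix.mul_sub, hQp, hQq, sub_zero, hpQ]
  have hM : Q * (T p) * Q - Q * (T q) * Q = p := by
    have h3 : Q * (T p - T q) * Q = Q * (p - q) * Q := by rw [h2]
    rw [Matrix.mul_sub, Matrix.sub_mul, h4] at h3
    exact h3
  have hTppsd : (T p).PosSemidef := channel_psd hc hppsd
  have hTqpsd : (T q).PosSemidef := channel_psd hc hqpsd
  have hqQpsd : (Q * (T q) * Q).PosSemidef := psd_herm_sandwich hTqpsd hQH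
  have hbpsd : ((1 - Q) * (T p) * (1 - Q)).PosSemidef := psd_herm_sandwich hTppsd h1QH
  have ha : (0:ℂ) ≤ (Q * (T q) * Q).trace := trace_nonneg_of_psd hqQpsd
  have hb : (0:ℂ) ≤ ((1 - Q) * (T p) * (1 - Q)).trace := trace_nonneg_of_psd hbpsd
  have hE : (Q * (T p) * Q).trace - (Q * (T q) * Q).trace = p.trace := by
    have := congrArg Matrix.trace hM
    rwa [Matrix.trace_sub] at this
  have hF : (T p).trace - (Q * (T p) * Q).trace = ((1 - Q) * (T p) * (1 - Q)).trace :=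
    trace_sandwich_decomp hQQ
  rw [channel_tp hc] at hF
  have hab : (Q * (T q) * Q).trace + ((1 - Q) * (T p) * (1 - Q)).trace = 0 := by
    linear_combination -hE - hF
  have ha0 : (Q * (T q) * Q).trace = 0 := by
    refine le_antisymm ?_ ha
    calc (Q * (T q) * Q).trace
        ≤ (Q * (T q) * Q).trace + ((1 - Q) * (T p) * (1 - Q)).trace := le_add_of_nonneg_right hb
      _ = 0 := hab
  have hb0 : ((1 - Q) * (T p) * (1 - Q)).trace = 0 := by
    have := hab
    rw [ha0, zero_add] at this
    exact this
  have hQTqQ : Q * (T q) * Q = 0 := eq_zero_of_psd_trace_zero hqQpsd ha0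
  have hcorner : (1 - Q) * (T p) * (1 - Q) = 0 := eq_zero_of_psd_trace_zero hbpsd hb0
  have hTp1Q : (T p) * (1 - Q) = 0 := psd_corner_zero hTppsd h1QH hcorner
  have hTpQ : (T p) * Q = T p := by
    have := hTp1Q
    rw [Matrix.mul_sub, Matrix.mul_one, sub_eq_zero] at this
    exact this.symm
  have h1QTp : (1 - Q) * (T p) = 0 := by
    have := congrArg conjTranspose hTp1Q
    rwa [conjTranspose_mul, h1QH.eq, hTppsd.1.eq, conjTranspose_zero] at this
  have hQTp : Q * (T p) = T p := by
    have := h1QTp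
    rw [Matrix.sub_mul, Matrix.one_mul, sub_eq_zero] at this
    exact this.symm
  have hTp : T p = p := by
    conv_rhs => rw [← hM]
    rw [hQTqQ, sub_zero, hQTp, hTpQ]
  have hTq : T q = q := by
    rw [hTp] at h2
    have := sub_right_injective h2
    exact this
  refine ⟨p, q, Q, hppsd, hqpsd, hpq, hTp, hTq, hQp, hQq, ?_, ?_⟩
  · intro x hx
    rw [← specFun_id hδ, specFun_mulVec_zero_iff] at hx
    rw [hpdef, specFun_mulVec_zero_iff]
    intro i
    by_cases hl : hδ.eigenvalues i = 0
    · simp [hfp, hl]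
    · have hw : ((star (hδ.eigenvectorUnitary : Mn n)) *ᵥ x) i = 0 := by
        have hne : (hδ.eigenvalues i : ℂ) ≠ 0 := by exact_mod_cast hl
        exact (mul_eq_zero.mp (hx i)).resolve_left hne
      rw [hw, mul_zero]
  · intro x hx
    rw [← specFun_id hδ, specFun_mulVec_zero_iff] at hx
    rw [hqdef, specFun_mulVec_zero_iff]
    intro i
    by_cases hl : hδ.eigenvalues i = 0
    · simp [hfq, hl]
    · have hw : ((star (hδ.eigenvectorUnitary : Mn n)) *ᵥ x) i = 0 := by
        have hne : (hδ.eigenvalues i : ℂ) ≠ 0 := by exact_mod_cast hl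
        exact (mul_eq_zero.mp (hx i)).resolve_left hne
      rw [hw, mul_zero]


lemma finsum_mulVec {k : ℕ} (M : Fin k → Mn n) (x : Fin n → ℂ) :
    (∑ j, M j) *ᵥ x = ∑ j, M j *ᵥ x :=
  map_sum (Matrix.mulVec.addMonoidHomLeft x) M Finset.univ

lemma dotProduct_finsum {k : ℕ} (v : Fin n → ℂ) (w : Fin k → (Fin n → ℂ)) :
    v ⬝ᵥ (∑ j, w j) = ∑ j, v ⬝ᵥ w j := by
  simp only [dotProduct, Finset.sum_apply, Finset.mul_sum]
  exact Finset.sum_comm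

lemma invariant_support (hc : IsChannel T) {ρ : Mn n} (hρ : ρ.PosSemidef)
    (hinv : T ρ = ρ) (hirr : IsIrreducibleMap T) (hne : ρ ≠ 0) : ρ.PosDef := by
  classical
  set χ : ℝ → ℝ := fun x => if x = 0 then 0 else 1 with hχdef
  set P : Mn n := specFun hρ.1 χ with hPdef
  have hPH : P.IsHermitian := specFun_herm _ _
  have hPP : P * P = P := by
    rw [hPdef, specFun_mul]
    apply specFun_congr
    intro x
    by_cases h : x = 0 <;> simp [hχdef, h]
  have hρP : ρ * P = ρ := by
    conv_lhs => rw [← specFun_id hρ.1]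
    rw [hPdef, specFun_mul]
    conv_rhs => rw [← specFun_id hρ.1]
    apply specFun_congr
    intro x
    by_cases h : x = 0 <;> simp [hχdef, h]
  have hker : ∀ x, ρ *ᵥ x = 0 ↔ P *ᵥ x = 0 := by
    intro x
    conv_lhs => rw [← specFun_id hρ.1]
    rw [hPdef, specFun_mulVec_zero_iff, specFun_mulVec_zero_iff]
    constructor
    · intro h i
      by_cases hl : hρ.1.eigenvalues i = 0
      · simp [hχdef, hl]
      · have hne' : (hρ.1.eigenvalues i : ℂ) ≠ 0 := by exact_mod_cast hl
        have hw := (mul_eq_zero.mp (h i)).resolve_left hne'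
        rw [hw, mul_zero]
    · intro h i
      by_cases hl : hρ.1.eigenvalues i = 0
      · simp [hl]
      · have := h i
        rw [hχdef] at this
        simp only [hl, if_neg] at this
        have hw : ((star (hρ.1.eigenvectorUnitary : Mn n)) *ᵥ x) i = 0 := by
          simpa using this
        rw [hw, mul_zero]
  obtain ⟨k, V, hV, hVsum⟩ := hc
  have hkerV : ∀ x, P *ᵥ x = 0 → ∀ i, P *ᵥ ((V i)ᴴ *ᵥ x) = 0 := by
    intro x hx i
    have hρx : ρ *ᵥ x = 0 := (hker x).mpr hx
    have hdot : star x ⬝ᵥ ρ *ᵥ x = 0 := by rw [hρx, dotProduct_zero]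
    have hexp : star x ⬝ᵥ ρ *ᵥ x =
        ∑ j, star ((V j)ᴴ *ᵥ x) ⬝ᵥ ρ *ᵥ ((V j)ᴴ *ᵥ x) := by
      conv_lhs => rw [← hinv, hV]
      rw [finsum_mulVec, dotProduct_finsum]
      congr 1
      funext j
      rw [← mulVec_mulVec, ← mulVec_mulVec, dotProduct_mulVec, star_mulVec,
        conjTranspose_conjTranspose]
    have hnn : ∀ j ∈ Finset.univ, (0:ℂ) ≤ star ((V j)ᴴ *ᵥ x) ⬝ᵥ ρ *ᵥ ((V j)ᴴ *ᵥ x) := by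
      intro j _
      exact hρ.dotProduct_mulVec_nonneg _
    have hz := (Finset.sum_eq_zero_iff_of_nonneg hnn).mp (by rw [← hexp, hdot]) i
      (Finset.mem_univ i)
    have hρy : ρ *ᵥ ((V i)ᴴ *ᵥ x) = 0 := (hρ.dotProduct_mulVec_zero_iff _).mp hz
    exact (hker _).mp hρy
  have hVP : ∀ i, V i * P = P * V i * P := by
    intro i
    have hmat : P * (V i)ᴴ * (1 - P) = 0 := by
      apply eq_zero_of_mulVec
      intro x
      have h1 : P *ᵥ ((1 - P) *ᵥ x) = 0 := by
        rw [mulVec_mulVec, Matrix.mul_sub, Matrix.mul_one, hPP, sub_self, zero_mulVec]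
      have h2 := hkerV _ h1 i
      calc (P * (V i)ᴴ * (1 - P)) *ᵥ x = P *ᵥ ((V i)ᴴ *ᵥ ((1 - P) *ᵥ x)) := by
            simp only [mulVec_mulVec, Matrix.mul_assoc]
        _ = 0 := h2
    have h1P : (1 - P : Mn n).IsHermitian := by
      rw [Matrix.IsHermitian, conjTranspose_sub, conjTranspose_one, hPH.eq]
    have hmatT := congrArg conjTranspose hmat
    rw [conjTranspose_mul, conjTranspose_mul, h1P.eq, conjTranspose_conjTranspose, hPH.eq,
      conjTranspose_zero] at hmatT
    -- hmatT : (1 - P) * (V i * P) = 0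
    have : V i * P - P * (V i * P) = 0 := by
      have := hmatT
      rwa [Matrix.sub_mul, Matrix.one_mul] at this
    rw [sub_eq_zero] at this
    rw [this, Matrix.mul_assoc]
  have hred : ∀ X : Mn n, ∃ Y : Mn n, T (P * X * P) = P * Y * P := by
    intro X
    refine ⟨T (P * X * P), ?_⟩
    conv_lhs => rw [hV]
    conv_rhs => rw [hV]
    rw [Finset.mul_sum, Finset.sum_mul]
    congr 1
    funext i
    have hA : P * (V i * P) = V i * P := by
      rw [hVP i, ← Matrix.mul_assoc, ← Matrix.mul_assoc, hPP]
    have e1 : V i * (P * X * P) * (V i)ᴴ = (V i * P) * X * (V i * P)ᴴ := by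
      rw [conjTranspose_mul, hPH.eq]
      noncomm_ring
    have hAc : (V i * P)ᴴ * P = (V i * P)ᴴ := by
      have := congrArg conjTranspose hA
      rwa [conjTranspose_mul, hPH.eq] at this
    rw [e1]
    calc V i * P * X * (V i * P)ᴴ
        = (P * (V i * P)) * X * ((V i * P)ᴴ * P) := by rw [hA, hAc]
      _ = P * (V i * P * X * (V i * P)ᴴ) * P := by noncomm_ring
  rcases hirr P hPH hPP hred with h0 | h1
  · exfalso
    apply hne
    rw [← hρP, h0, Matrix.mul_zero]
  · refine PosDef.of_dotProduct_mulVec_pos hρ.1 ?_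
    intro x hx
    rcases lt_or_eq_of_le (hρ.dotProduct_mulVec_nonneg x) with h | h
    · exact h
    · exfalso
      have hρx : ρ *ᵥ x = 0 := (hρ.dotProduct_mulVec_zero_iff x).mp h.symm
      have hPx := (hker x).mp hρx
      rw [h1, one_mulVec] at hPx
      exact hx hPx

end Stmt10Aux

open Stmt10Aux in
/-- (Carbone–Pautrat) Let `T` be a completely positive trace-preserving map
on `M_n`. (1) If `T` is irreducible and `π` is an invariant state, then `π` is the unique
invariant state and is faithful (positive definite). (2) Conversely, if `T` has a unique
invariant state and it is positive definite, then `T` is irreducible. -/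
theorem stmt10 {n : ℕ} (T : Module.End ℂ (Mn n)) (hchan : IsChannel T) :
    (∀ π : Mn n, π.PosSemidef → π.trace = 1 → T π = π → IsIrreducibleMap T →
      π.PosDef ∧ ∀ σ : Mn n, σ.PosSemidef → σ.trace = 1 → T σ = σ → σ = π) ∧
    (∀ π : Mn n, π.PosSemidef → π.trace = 1 → T π = π → π.PosDef →
      (∀ σ : Mn n, σ.PosSemidef → σ.trace = 1 → T σ = σ → σ = π) →
      IsIrreducibleMap T) := by
  constructor
  · -- Part 1
    rintro π hπ hπtr hπinv hirr
    have hπne : π ≠ 0 := by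
      intro h
      rw [h, Matrix.trace_zero] at hπtr
      exact one_ne_zero hπtr.symm
    have hπpd : π.PosDef := invariant_support hchan hπ hπinv hirr hπne
    refine ⟨hπpd, ?_⟩
    intro σ hσ hσtr hσinv
    have hδH : (σ - π).IsHermitian := hσ.1.sub hπ.1
    have hδinv : T (σ - π) = σ - π := by rw [map_sub, hσinv, hπinv]
    obtain ⟨p, q, Q, hp, hq, hpq, hTp, hTq, hQp, hQq, hkp, hkq⟩ :=
      invariant_parts hchan hδH hδinv
    have hδtr : (σ - π).trace = 0 := by rw [Matrix.trace_sub, hσtr, hπtr, sub_self]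
    have hp0 : p = 0 := by
      by_contra hp0
      have hppd : p.PosDef := invariant_support hchan hp hTp hirr hp0
      have hQ1 : Q = 1 := by
        have h0 : (Q - 1) * p = 0 * p := by
          rw [Matrix.sub_mul, hQp, Matrix.one_mul, sub_self, Matrix.zero_mul]
        have hcan := hppd.isUnit.mul_right_cancel h0
        rwa [sub_eq_zero] at hcan
      have hq0 : q = 0 := by rwa [hQ1, Matrix.one_mul] at hQq
      apply hp0
      apply eq_zero_of_psd_trace_zero hp
      have hδp : σ - π = p := by rw [hpq, hq0, sub_zero]
      rw [← hδp]
      exact hδtr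
    have hq0 : q = 0 := by
      apply eq_zero_of_psd_trace_zero hq
      have hδq : σ - π = -q := by rw [hpq, hp0, zero_sub]
      have := hδtr
      rw [hδq, Matrix.trace_neg, neg_eq_zero] at this
      exact this
    have : σ - π = 0 := by rw [hpq, hp0, hq0, sub_zero]
    exact sub_eq_zero.mp this
  · -- Part 2
    rintro π hπ hπtr hπinv hπpd huniq
    intro P hPH hPP hred
    by_cases hP0 : P = 0
    · exact Or.inl hP0
    by_cases hP1 : P = 1
    · exact Or.inr hP1
    exfalso
    have hPpsd : P.PosSemidef := by
      have h : Pᴴ * P = P := by rw [hPH.eq, hPP]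
      rw [← h]
      exact posSemidef_conjTranspose_mul_self P
    have hPtr : P.trace ≠ 0 := fun h => hP0 (eq_zero_of_psd_trace_zero hPpsd h)
    have hsand : ∀ X : Mn n, sandwich P X = P * X * P := by
      intro X
      simp [sandwich, LinearMap.mulLeft_apply, LinearMap.mulRight_apply, Matrix.mul_assoc]
    set W : Submodule ℂ (Mn n) :=
      LinearMap.ker ((sandwich P) - (1 : Module.End ℂ (Mn n))) with hWdef
    have hmemW : ∀ X : Mn n, X ∈ W ↔ P * X * P = X := by
      intro X
      rw [hWdef, LinearMap.mem_ker, LinearMap.sub_apply, Module.End.one_apply, sub_eq_zero,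
        hsand]
    have hTW : ∀ X ∈ W, T X ∈ W := by
      intro X hX
      rw [hmemW] at hX ⊢
      obtain ⟨Y, hY⟩ := hred X
      rw [hX] at hY
      rw [hY]
      calc P * (P * Y * P) * P = (P * P) * Y * (P * P) := by noncomm_ring
        _ = P * Y * P := by rw [hPP]
    set S : W →ₗ[ℂ] W := (T : Mn n →ₗ[ℂ] Mn n).restrict hTW with hSdef
    set Sm : W →ₗ[ℂ] W := S - LinearMap.id with hSmdef
    have hPW : P ∈ W := by rw [hmemW, hPP, hPP]
    have hkerSm : LinearMap.ker Sm ≠ ⊥ := by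
      intro hbot
      have hinj : Function.Injective Sm := LinearMap.ker_eq_bot.mp hbot
      have hsurj : Function.Surjective Sm := LinearMap.injective_iff_surjective.mp hinj
      obtain ⟨w, hw⟩ := hsurj ⟨P, hPW⟩
      have hval : T (w : Mn n) - (w : Mn n) = P := by
        have h2 := congrArg (Subtype.val) hw
        simpa [hSmdef, hSdef, LinearMap.sub_apply, LinearMap.restrict_apply] using h2
      have : P.trace = 0 := by
        rw [← hval, Matrix.trace_sub, channel_tp hchan, sub_self]
      exact hPtr this
    obtain ⟨w, hwker, hwne⟩ := (LinearMap.ker Sm).ne_bot_iff.mp hkerSm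
    have hX : T (w : Mn n) = (w : Mn n) := by
      have h2 : Sm w = 0 := hwker
      have h3 := congrArg (Subtype.val) h2
      have h4 : T (w : Mn n) - (w : Mn n) = 0 := by
        simpa [hSmdef, hSdef, LinearMap.sub_apply, LinearMap.restrict_apply] using h3
      rwa [sub_eq_zero] at h4
    have hXW : P * (w : Mn n) * P = (w : Mn n) := (hmemW _).mp w.2
    have hXne : (w : Mn n) ≠ 0 := by
      intro h
      exact hwne (Subtype.ext h)
    -- the key reusable argument
    have key : ∀ δ : Mn n, δ.IsHermitian → T δ = δ → P * δ * P = δ → δ ≠ 0 → False := by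
      intro δ hδH hδinv hδP hδne
      obtain ⟨p, q, Q, hp, hq, hpq, hTp, hTq, hQp, hQq, hkp, hkq⟩ :=
        invariant_parts hchan hδH hδinv
      have hδ1P : δ * (1 - P) = 0 := by
        have hδP2 : δ * P = δ := by
          conv_lhs => rw [← hδP]
          rw [Matrix.mul_assoc (P * δ), hPP]
          exact hδP
        rw [Matrix.mul_sub, Matrix.mul_one, hδP2, sub_self]
      have huse : ∀ r : Mn n, r.PosSemidef → T r = r →
          (∀ x, δ *ᵥ x = 0 → r *ᵥ x = 0) → r ≠ 0 → False := by
        intro r hr hTr hkr hrne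
        have hr1P : r * (1 - P) = 0 := by
          apply eq_zero_of_mulVec
          intro x
          have h1 : δ *ᵥ ((1 - P) *ᵥ x) = 0 := by
            rw [mulVec_mulVec, hδ1P, zero_mulVec]
          have h2 := hkr _ h1
          rw [← mulVec_mulVec]
          exact h2
        have hc0 : 0 ≤ r.trace := trace_nonneg_of_psd hr
        have hcne : r.trace ≠ 0 := fun h => hrne (eq_zero_of_psd_trace_zero hr h)
        set a : ℝ := (r.trace).re with hadef
        have hrt : r.trace = (a : ℂ) := by
          obtain ⟨h1, h2⟩ := Complex.le_def.mp hc0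
          apply Complex.ext
          · simp [hadef]
          · simp [hadef, ← h2]
        have hrepos : 0 ≤ a := by
          have := (Complex.le_def.mp hc0).1
          simpa [hadef] using this
        have hrene : a ≠ 0 := by
          intro h
          apply hcne
          rw [hrt, h, Complex.ofReal_zero]
        have ht0 : (0:ℝ) ≤ a⁻¹ := inv_nonneg.mpr hrepos
        set σ : Mn n := ((a⁻¹ : ℝ) : ℂ) • r with hσdef
        have hσpsd : σ.PosSemidef := psd_smul hr ht0
        have hσtr : σ.trace = 1 := by
          rw [hσdef, Matrix.trace_smul, smul_eq_mul, hrt, ← Complex.ofReal_mul,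
            inv_mul_cancel₀ hrene, Complex.ofReal_one]
        have hσinv : T σ = σ := by rw [hσdef, _root_.map_smul, hTr]
        have hσπ : σ = π := huniq σ hσpsd hσtr hσinv
        have hπ1P : π * (1 - P) = 0 := by
          rw [← hσπ, hσdef, Matrix.smul_mul, hr1P, smul_zero]
        have h1Pne : (1 - P : Mn n) ≠ 0 := by
          intro h
          rw [sub_eq_zero] at h
          exact hP1 h.symm
        have hy : ∃ x, (1 - P : Mn n) *ᵥ x ≠ 0 := by
          by_contra hall
          push_neg at hall
          exact h1Pne (eq_zero_of_mulVec hall)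
        obtain ⟨x, hyne⟩ := hy
        have hπy : π *ᵥ ((1 - P) *ᵥ x) = 0 := by
          rw [mulVec_mulVec, hπ1P, zero_mulVec]
        have hlt := hπpd.dotProduct_mulVec_pos hyne
        rw [hπy, dotProduct_zero] at hlt
        exact lt_irrefl 0 hlt
      by_cases hp0 : p = 0
      · refine huse q hq hTq hkq ?_
        intro hq0
        apply hδne
        rw [hpq, hp0, hq0, sub_zero]
      · exact huse p hp hTp hkp hp0
    -- build a Hermitian invariant element supported in P
    have hXH' : T (w : Mn n)ᴴ = (w : Mn n)ᴴ := by rw [channel_conjT hchan, hX]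
    have hXWc : P * (w : Mn n)ᴴ * P = (w : Mn n)ᴴ := by
      have h2 := congrArg conjTranspose hXW
      rw [conjTranspose_mul, conjTranspose_mul, hPH.eq] at h2
      rw [← Matrix.mul_assoc] at h2
      exact h2
    by_cases hA0 : (w : Mn n) + (w : Mn n)ᴴ = 0
    · -- use the imaginary part
      set C : Mn n := Complex.I • ((w : Mn n) - (w : Mn n)ᴴ) with hCdef
      have hCH : C.IsHermitian := by
        rw [Matrix.IsHermitian, hCdef, conjTranspose_smul, conjTranspose_sub,
          conjTranspose_conjTranspose]
        rw [Complex.star_def, Complex.conj_I]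
        rw [neg_smul, ← smul_neg, neg_sub]
      have hCinv : T C = C := by
        rw [hCdef, _root_.map_smul, _root_.map_sub, hX, hXH']
      have hCP : P * C * P = C := by
        rw [hCdef, Matrix.mul_smul, Matrix.smul_mul, Matrix.mul_sub, Matrix.sub_mul,
          hXW, hXWc]
      have hCne : C ≠ 0 := by
        intro h
        rw [hCdef, smul_eq_zero] at h
        rcases h with h | h
        · exact Complex.I_ne_zero h
        · rw [sub_eq_zero] at h
          apply hXne
          have h2 : (w : Mn n) + (w : Mn n) = 0 := by
            nth_rewrite 2 [h]
            exact hA0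
          have h3 : (2:ℂ) • (w : Mn n) = 0 := by
            rw [two_smul]
            exact h2
          rcases smul_eq_zero.mp h3 with h4 | h4
          · norm_num at h4
          · exact h4
      exact key C hCH hCinv hCP hCne
    · have hAH : ((w : Mn n) + (w : Mn n)ᴴ).IsHermitian := by
        rw [Matrix.IsHermitian, conjTranspose_add, conjTranspose_conjTranspose, add_comm]
      have hAinv : T ((w : Mn n) + (w : Mn n)ᴴ) = (w : Mn n) + (w : Mn n)ᴴ := by
        rw [map_add, hX, hXH']
      have hAP : P * ((w : Mn n) + (w : Mn n)ᴴ) * P = (w : Mn n) + (w : Mn n)ᴴ := by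
        rw [Matrix.mul_add, Matrix.add_mul, hXW, hXWc]
      exact key _ hAH hAinv hAP hA0
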